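/- Let A ⊆ ℝⁿ be closed, K ⊆ A compact, k ≥ 1, and F a C^k function defined on a neighborhood U of A whose (k−1)-jet vanishes on A ∩ U. For a ∈ A ∩ U let 𝒯_{a,k}F(x) = Σ_{|β| = k} (1/β!) D^β F(a) (x − a)^β be the k-th Taylor polynomial of F at a. Then there is a constant C_K > 0 such that for all a ∈ K and all x ∈ B(1, a): |𝒯_{a,k}F(x)| ≤ C_K · r_a(x)^k, where r_a(x) = dist(x, a + TₐA) is the distance to the affine generalized tangent space at a. -/

import Mathlib

set_option maxHeartbeats 1000000

open Function Fin Metric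

section helpers
variable {E : Type*} [NormedAddCommGroup E] [NormedSpace ℝ E] {f : E → ℝ} {U : Set E} {k : ℕ}

theorem aux_diffAt (hU : IsOpen U) (hf : ContDiffOn ℝ k f U) {j : ℕ} (hj : j < k)
    {y : E} (hy : y ∈ U) : DifferentiableAt ℝ (iteratedFDeriv ℝ j f) y := by
  have h1 : (1 : WithTop ℕ∞) + j ≤ k := by exact_mod_cast Nat.one_add_le_iff.mpr hj
  exact ((hf.contDiffAt (hU.mem_nhds hy)).iteratedFDeriv_right h1).differentiableAt one_ne_zero

theorem swap_adj (hU : IsOpen U) (hf : ContDiffOn ℝ k f U) :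
    ∀ (i N : ℕ) (h2 : i + 2 ≤ N) (hN : N ≤ k) {x : E} (hx : x ∈ U) (m : Fin N → E),
      iteratedFDeriv ℝ N f x
        (m ∘ Equiv.swap (⟨i, by omega⟩ : Fin N) ⟨i + 1, by omega⟩) =
      iteratedFDeriv ℝ N f x m := by
  intro i
  induction i with
  | zero =>
    intro N h2 hN x hx m
    obtain ⟨N', rfl⟩ : ∃ N', N = N' + 2 := ⟨N - 2, by omega⟩
    set Φ := iteratedFDeriv ℝ N' f with hΦ
    have hΦd : ∀ y ∈ U, DifferentiableAt ℝ Φ y := fun y hy =>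
      aux_diffAt hU hf (by omega) hy
    have hΦ'd : DifferentiableAt ℝ (fderiv ℝ Φ) x := by
      have c1 : ContDiffAt ℝ 2 Φ x :=
        (hf.contDiffAt (hU.mem_nhds hx)).iteratedFDeriv_right
          (by exact_mod_cast (by omega : 2 + N' ≤ k))
      exact (c1.fderiv_right (m := 1) (by norm_num)).differentiableAt one_ne_zero
    set D2 := fderiv ℝ (fderiv ℝ Φ) x with hD2
    have hsym : ∀ v w, D2 v w = D2 w v :=
      second_derivative_symmetric_of_eventually_of_real
        (Filter.eventually_of_mem (hU.mem_nhds hx) fun y hy => (hΦd y hy).hasFDerivAt)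
        hΦ'd.hasFDerivAt
    set Cs := ((continuousMultilinearCurryLeftEquiv ℝ (fun _ : Fin (N' + 1) => E)
      ℝ).symm.toContinuousLinearEquiv.toContinuousLinearMap) with hCs
    have hder : HasFDerivAt (iteratedFDeriv ℝ (N' + 1) f) (Cs.comp D2) x := by
      rw [iteratedFDeriv_succ_eq_comp_left]
      have hC : HasFDerivAt (⇑Cs) Cs (fderiv ℝ Φ x) := Cs.hasFDerivAt
      have h2 : HasFDerivAt (fderiv ℝ Φ) D2 x := hΦ'd.hasFDerivAt
      have := @HasFDerivAt.comp ℝ _ E _ _ (E →L[ℝ] E [×N']→L[ℝ] ℝ) _ _ _ _ _ (fderiv ℝ Φ) D2 x ⇑Cs Cs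
      exact this hC h2
    have key : ∀ m : Fin (N' + 2) → E, iteratedFDeriv ℝ (N' + 2) f x m =
        D2 (m 0) (m 1) (fun j => m j.succ.succ) := by
      intro m
      rw [iteratedFDeriv_succ_apply_left, hder.fderiv]
      rfl
    rw [key, key]
    have h0 : (⟨0, by omega⟩ : Fin (N' + 2)) = 0 := rfl
    have h1 : (⟨0 + 1, by omega⟩ : Fin (N' + 2)) = 1 := rfl
    rw [h0, h1]
    have e0 : (m ∘ Equiv.swap (0 : Fin (N' + 2)) 1) 0 = m 1 := by
      simp [Equiv.swap_apply_left]
    have e1 : (m ∘ Equiv.swap (0 : Fin (N' + 2)) 1) 1 = m 0 := by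
      simp [Equiv.swap_apply_right]
    have e2 : (fun j : Fin N' => (m ∘ Equiv.swap (0 : Fin (N' + 2)) 1) j.succ.succ) =
        (fun j : Fin N' => m j.succ.succ) := by
      funext j
      have hne0 : (j.succ.succ : Fin (N' + 2)) ≠ 0 := Fin.succ_ne_zero _
      have hne1 : (j.succ.succ : Fin (N' + 2)) ≠ 1 := by
        intro h
        exact Fin.succ_ne_zero j (Fin.succ_injective _ (h.trans Fin.succ_zero_eq_one.symm))
      simp [Equiv.swap_apply_of_ne_of_ne hne0 hne1]
    rw [e0, e1, e2, hsym]
  | succ i ih =>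
    intro N h2 hN x hx m
    obtain ⟨N', rfl⟩ : ∃ N', N = N' + 1 := ⟨N - 1, by omega⟩
    set σ := Equiv.swap (⟨i + 1, by omega⟩ : Fin (N' + 1)) ⟨i + 1 + 1, by omega⟩ with hσ
    have hm0 : (m ∘ σ) 0 = m 0 := by
      have : σ 0 = 0 :=
        Equiv.swap_apply_of_ne_of_ne (by simp [Fin.ext_iff]) (by simp [Fin.ext_iff])
      simp [this]
    have htail : Fin.tail (m ∘ σ) =
        (Fin.tail m) ∘ Equiv.swap (⟨i, by omega⟩ : Fin N') ⟨i + 1, by omega⟩ := by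
      funext j
      show m (σ j.succ) = m ((Equiv.swap (⟨i, by omega⟩ : Fin N') ⟨i + 1, by omega⟩ j).succ)
      congr 1
      have e1 : (⟨i + 1, by omega⟩ : Fin (N' + 1)) = Fin.succ ⟨i, by omega⟩ := rfl
      have e2 : (⟨i + 1 + 1, by omega⟩ : Fin (N' + 1)) = Fin.succ ⟨i + 1, by omega⟩ := rfl
      rw [hσ, e1, e2, (Fin.succ_injective N').swap_apply]
    set Φ := iteratedFDeriv ℝ N' f with hΦ
    have hd : DifferentiableAt ℝ Φ x := aux_diffAt hU hf (by omega) hx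
    have evf : ∀ c : Fin N' → E,
        fderiv ℝ (⇑(ContinuousMultilinearMap.apply ℝ (fun _ : Fin N' => E) ℝ c) ∘ Φ) x =
        (ContinuousMultilinearMap.apply ℝ (fun _ : Fin N' => E) ℝ c).comp (fderiv ℝ Φ x) :=
      fun c => ((ContinuousMultilinearMap.apply ℝ (fun _ : Fin N' => E) ℝ
        c).hasFDerivAt.comp x hd.hasFDerivAt).fderiv
    set c₂ := Fin.tail m with hc₂
    set c₁ := (Fin.tail m) ∘ Equiv.swap (⟨i, by omega⟩ : Fin N') ⟨i + 1, by omega⟩ with hc₁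
    have hev : (⇑(ContinuousMultilinearMap.apply ℝ (fun _ : Fin N' => E) ℝ c₁) ∘ Φ)
        =ᶠ[nhds x] (⇑(ContinuousMultilinearMap.apply ℝ (fun _ : Fin N' => E) ℝ c₂) ∘ Φ) := by
      filter_upwards [hU.mem_nhds hx] with y hy
      exact ih N' (by omega) (by omega) hy c₂
    have hkey : fderiv ℝ Φ x (m 0) c₁ = fderiv ℝ Φ x (m 0) c₂ := by
      have := hev.fderiv_eq (𝕜 := ℝ)
      rw [evf c₁, evf c₂] at this
      exact DFunLike.congr_fun this (m 0)
    rw [iteratedFDeriv_succ_apply_left, iteratedFDeriv_succ_apply_left, hm0, htail]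
    exact hkey
end helpers

/-- The generalized tangent space of a set `A` at `a`, as a submodule. -/
noncomputable def genTangent {E : Type*} [NormedAddCommGroup E] [NormedSpace ℝ E]
    (A : Set E) (a : E) : Submodule ℝ E :=
  ⨅ p ∈ {q : (E → ℝ) × Set E |
      IsOpen q.2 ∧ a ∈ q.2 ∧ ContDiffOn ℝ 1 q.1 q.2 ∧ ∀ x ∈ A ∩ q.2, q.1 x = 0},
    LinearMap.ker (fderivWithin ℝ p.1 p.2 a : E →ₗ[ℝ] ℝ)

/-- Improved Taylor estimate along generalized tangent spaces: let `A ⊆ ℝⁿ` be closed,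
`K ⊆ A` compact, `k ≥ 1`, and `F` a `C^k` function on an open neighborhood `U` of `A`
whose `(k−1)`-jet vanishes on `A ∩ U`.  Since the `(k−1)`-jet of `F` vanishes at `a`,
the `k`-th Taylor polynomial of `F` at `a ∈ A ∩ U` is its homogeneous degree-`k` term
`𝒯_{a,k}F(x) = (1/k!)·D^k F(a)[x−a,…,x−a]`.  Then there is `C_K > 0` such that for all
`a ∈ K` and `x ∈ B(1,a)`: `|𝒯_{a,k}F(x)| ≤ C_K · dist(x, a + TₐA)^k`. -/
theorem taylor_genTangent_estimate (n k : ℕ) (hk : 1 ≤ k)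
    (A : Set (EuclideanSpace ℝ (Fin n))) (hA : IsClosed A)
    (K : Set (EuclideanSpace ℝ (Fin n))) (hK : IsCompact K) (hKA : K ⊆ A)
    (U : Set (EuclideanSpace ℝ (Fin n))) (hU : IsOpen U) (hAU : A ⊆ U)
    (F : EuclideanSpace ℝ (Fin n) → ℝ) (hF : ContDiffOn ℝ k F U)
    (hjet : ∀ j : ℕ, j ≤ k - 1 → ∀ x ∈ A ∩ U, iteratedFDerivWithin ℝ j F U x = 0) :
    ∃ C : ℝ, 0 < C ∧ ∀ a ∈ K, ∀ x ∈ Metric.ball a 1,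
      |((k.factorial : ℝ))⁻¹ • (iteratedFDerivWithin ℝ k F U a (fun _ => x - a))| ≤
        C * Metric.infDist x ((fun v => a + v) ''
              (genTangent A a : Set (EuclideanSpace ℝ (Fin n)))) ^ k := by
  obtain ⟨k', rfl⟩ : ∃ k', k = k' + 1 := ⟨k - 1, by omega⟩
  -- First-slot vanishing
  have L1 : ∀ a ∈ A, ∀ v ∈ genTangent A a, ∀ m' : Fin k' → (EuclideanSpace ℝ (Fin n)),
      iteratedFDeriv ℝ (k' + 1) F a (Fin.cons v m') = 0 := by
    intro a ha v hv m'
    have haU : a ∈ U := hAU ha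
    set g : (EuclideanSpace ℝ (Fin n)) → ℝ :=
      ⇑(ContinuousMultilinearMap.apply ℝ (fun _ : Fin k' => (EuclideanSpace ℝ (Fin n))) ℝ m') ∘
        iteratedFDeriv ℝ k' F with hg
    have hgC1 : ContDiffOn ℝ 1 g U := by
      intro y hy
      have h1 : ContDiffAt ℝ 1 (iteratedFDeriv ℝ k' F) y :=
        (hF.contDiffAt (hU.mem_nhds hy)).iteratedFDeriv_right
          (by exact_mod_cast (by omega : 1 + k' ≤ k' + 1))
      exact (((ContinuousMultilinearMap.apply ℝ (fun _ : Fin k' => (EuclideanSpace ℝ (Fin n))) ℝ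
        m').contDiff.contDiffAt).comp y h1).contDiffWithinAt
    have hg0 : ∀ x ∈ A ∩ U, g x = 0 := by
      intro x hx
      have hz := hjet k' (by omega) x hx
      have e := iteratedFDerivWithin_of_isOpen (𝕜 := ℝ) (f := F) k' hU hx.2
      show iteratedFDeriv ℝ k' F x m' = 0
      rw [← e, hz]
      rfl
    have hker : fderivWithin ℝ g U a v = 0 := by
      simp only [genTangent, Submodule.mem_iInf] at hv
      exact hv (g, U) ⟨hU, haU, hgC1, hg0⟩
    have hd : DifferentiableAt ℝ (iteratedFDeriv ℝ k' F) a :=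
      aux_diffAt hU hF (by omega) haU
    have hgd : fderiv ℝ g a =
        (ContinuousMultilinearMap.apply ℝ (fun _ : Fin k' => (EuclideanSpace ℝ (Fin n))) ℝ m').comp
          (fderiv ℝ (iteratedFDeriv ℝ k' F) a) :=
      ((ContinuousMultilinearMap.apply ℝ (fun _ : Fin k' => (EuclideanSpace ℝ (Fin n))) ℝ
        m').hasFDerivAt.comp a hd.hasFDerivAt).fderiv
    have e2 : iteratedFDeriv ℝ (k' + 1) F a (Fin.cons v m') =
        fderiv ℝ (iteratedFDeriv ℝ k' F) a v m' := by
      rw [iteratedFDeriv_succ_apply_left, Fin.cons_zero, Fin.tail_cons]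
    rw [e2]
    have : fderiv ℝ g a v = 0 := by
      rw [← fderivWithin_of_isOpen hU haU]
      exact hker
    rw [hgd] at this
    exact this
  -- vanishing in any slot
  have Z : ∀ a ∈ A, ∀ (m : Fin (k' + 1) → (EuclideanSpace ℝ (Fin n))) (i : Fin (k' + 1)),
      m i ∈ genTangent A a → iteratedFDeriv ℝ (k' + 1) F a m = 0 := by
    intro a ha
    have haU : a ∈ U := hAU ha
    suffices H : ∀ iv : ℕ, ∀ (hiv : iv < k' + 1) (m : Fin (k' + 1) → (EuclideanSpace ℝ (Fin n))),
        m ⟨iv, hiv⟩ ∈ genTangent A a → iteratedFDeriv ℝ (k' + 1) F a m = 0 by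
      intro m i hm
      exact H i.val i.isLt m (by simpa using hm)
    intro iv
    induction iv with
    | zero =>
      intro h m hm
      have h0 : (⟨0, h⟩ : Fin (k' + 1)) = 0 := rfl
      rw [h0] at hm
      have := L1 a ha (m 0) hm (Fin.tail m)
      rwa [Fin.cons_self_tail] at this
    | succ j ih =>
      intro h m hm
      set σ := Equiv.swap (⟨j, by omega⟩ : Fin (k' + 1)) ⟨j + 1, by omega⟩ with hσ
      have hswap := swap_adj hU hF j (k' + 1) (by omega) le_rfl haU m
      rw [← hswap]
      refine ih (by omega) (m ∘ σ) ?_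
      have : σ ⟨j, by omega⟩ = ⟨j + 1, by omega⟩ := Equiv.swap_apply_left _ _
      show m (σ ⟨j, by omega⟩) ∈ genTangent A a
      rw [this]
      exact hm
  -- replacement of the argument modulo the tangent space
  have rep : ∀ a ∈ A, ∀ u : (EuclideanSpace ℝ (Fin n)), ∀ t ∈ genTangent A a,
      iteratedFDeriv ℝ (k' + 1) F a (fun _ => u) =
      iteratedFDeriv ℝ (k' + 1) F a (fun _ => u - t) := by
    intro a ha u t ht
    have main : ∀ j ≤ k' + 1,
        iteratedFDeriv ℝ (k' + 1) F a (fun i => if (i : ℕ) < j then u - t else u) =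
        iteratedFDeriv ℝ (k' + 1) F a (fun _ => u) := by
      intro j
      induction j with
      | zero => intro _; simp
      | succ j ih =>
        intro hj
        set p : Fin (k' + 1) := ⟨j, by omega⟩ with hp
        set base : Fin (k' + 1) → (EuclideanSpace ℝ (Fin n)) := fun i => if (i : ℕ) < j then u - t else u with hbase
        have hupdate : (fun i : Fin (k' + 1) => if (i : ℕ) < j + 1 then u - t else u) =
            Function.update base p (u - t) := by
          funext i
          by_cases hip : i = p
          · subst hip
            simp [hbase, hp]
          · rw [Function.update_of_ne hip, hbase]
            have : (i : ℕ) ≠ j := fun hc => hip (Fin.ext (by simp [hp, hc]))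
            rw [if_congr (show ((i : ℕ) < j + 1) ↔ ((i : ℕ) < j) by omega) rfl rfl]
        rw [hupdate, ContinuousMultilinearMap.map_update_sub]
        have hz : iteratedFDeriv ℝ (k' + 1) F a (Function.update base p t) = 0 := by
          refine Z a ha _ p ?_
          simp only [Function.update_self]
          exact ht
        have hb : Function.update base p u = base := by
          funext i
          by_cases hip : i = p
          · subst hip
            simp [hbase, hp]
          · rw [Function.update_of_ne hip]
        rw [hz, hb, sub_zero]
        exact ih (by omega)
    have h1 := main (k' + 1) le_rfl
    have h2 : (fun i : Fin (k' + 1) => if (i : ℕ) < k' + 1 then u - t else u) =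
        (fun _ : Fin (k' + 1) => u - t) := by
      funext i
      simp [i.isLt]
    rw [h2] at h1
    exact h1.symm
  -- uniform bound on the norms of the derivatives
  obtain ⟨C₀, hC₀⟩ : ∃ C₀, ∀ a ∈ K, ‖iteratedFDeriv ℝ (k' + 1) F a‖ ≤ C₀ := by
    have hcont : ContinuousOn (iteratedFDeriv ℝ (k' + 1) F) U :=
      (hF.continuousOn_iteratedFDerivWithin le_rfl hU.uniqueDiffOn).congr
        fun y hy => (iteratedFDerivWithin_of_isOpen (k' + 1) hU hy).symm
    exact hK.exists_bound_of_continuousOn (hcont.mono (hKA.trans hAU))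
  refine ⟨((k' + 1).factorial : ℝ)⁻¹ * (max C₀ 1), by positivity, ?_⟩
  intro a haK x _
  have haA : a ∈ A := hKA haK
  have haU : a ∈ U := hAU haA
  set T := genTangent A a with hT
  have hTclosed : IsClosed (T : Set (EuclideanSpace ℝ (Fin n))) := Submodule.closed_of_finiteDimensional T
  obtain ⟨t, htT, htd⟩ := hTclosed.exists_infDist_eq_dist ⟨0, T.zero_mem⟩ (x - a)
  have himg : Metric.infDist x ((fun v => a + v) '' (T : Set (EuclideanSpace ℝ (Fin n)))) =
      Metric.infDist (x - a) (T : Set (EuclideanSpace ℝ (Fin n))) := by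
    have hiso : Isometry (fun v : (EuclideanSpace ℝ (Fin n)) => a + v) :=
      Isometry.of_dist_eq fun v w => by simp [dist_eq_norm]
    have := Metric.infDist_image (x := x - a) (t := (T : Set (EuclideanSpace ℝ (Fin n)))) hiso
    rw [add_sub_cancel] at this
    exact this
  have hwithin : iteratedFDerivWithin ℝ (k' + 1) F U a = iteratedFDeriv ℝ (k' + 1) F a :=
    iteratedFDerivWithin_of_isOpen (k' + 1) hU haU
  rw [hwithin, himg, htd]
  have hrep := rep a haA (x - a) t htT
  have hb : ‖iteratedFDeriv ℝ (k' + 1) F a (fun _ => x - a - t)‖ ≤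
      max C₀ 1 * ‖x - a - t‖ ^ (k' + 1) := by
    calc ‖iteratedFDeriv ℝ (k' + 1) F a (fun _ => x - a - t)‖
        ≤ ‖iteratedFDeriv ℝ (k' + 1) F a‖ * ∏ _i : Fin (k' + 1), ‖x - a - t‖ :=
          (iteratedFDeriv ℝ (k' + 1) F a).le_opNorm _
      _ ≤ max C₀ 1 * ‖x - a - t‖ ^ (k' + 1) := by
          rw [Finset.prod_const, Finset.card_univ, Fintype.card_fin]
          exact mul_le_mul (le_trans (hC₀ a haK) (le_max_left _ _)) le_rfl
            (by positivity) (by positivity)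
  rw [smul_eq_mul, abs_mul, abs_of_nonneg (by positivity : (0:ℝ) ≤ (((k'+1).factorial : ℝ))⁻¹),
    hrep]
  rw [dist_eq_norm]
  calc (((k' + 1).factorial : ℝ))⁻¹ * |iteratedFDeriv ℝ (k' + 1) F a (fun _ => x - a - t)|
      ≤ (((k' + 1).factorial : ℝ))⁻¹ * (max C₀ 1 * ‖x - a - t‖ ^ (k' + 1)) := by
        refine mul_le_mul_of_nonneg_left ?_ (by positivity)
        rw [← Real.norm_eq_abs]
        exact hb
    _ = (((k' + 1).factorial : ℝ))⁻¹ * max C₀ 1 * ‖x - a - t‖ ^ (k' + 1) := by ring
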